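/- arXiv:2110.01650 — 7 statements merged into one kernel-verified Lean document; each statement's English description precedes it below -/
import Mathlib

section
/- The additive group of real numbers ℝ admits a faithful action on a countable set. -/
open Cardinal

/-- The additive group of real numbers admits a faithful action on a countable set. -/
theorem real_countably_representable :
    ∃ (X : Type) (_ : Countable X) (φ : Multiplicative ℝ →* Equiv.Perm X),
      Function.Injective φ := by
  have hlt : Cardinal.lift.{0} #ℚ < Cardinal.lift.{0} #ℝ := by
    simp only [Cardinal.lift_id, Cardinal.mk_denumerable, Cardinal.mk_real]
    exact Cardinal.aleph0_lt_continuum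
  have h1 : Module.rank ℚ ℝ = #ℝ := Module.Free.rank_eq_mk_of_infinite_lt ℚ ℝ hlt
  have h2 : Module.rank ℚ (ℕ → ℚ) = #(ℕ → ℚ) := rank_fun_infinite
  have hcard : #(ℕ → ℚ) = #ℝ := by
    rw [Cardinal.mk_real, Cardinal.mk_arrow]
    simp [Cardinal.mk_denumerable, Cardinal.aleph0_power_aleph0]
  obtain ⟨e⟩ := nonempty_linearEquiv_of_rank_eq
    (h1.trans (hcard.symm.trans h2.symm) : Module.rank ℚ ℝ = Module.rank ℚ (ℕ → ℚ))
  refine ⟨ℕ × ℚ, inferInstance,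
    { toFun := fun r => Equiv.prodShear (Equiv.refl ℕ)
        (fun n => Equiv.addLeft (e (Multiplicative.toAdd r) n)),
      map_one' := ?_, map_mul' := ?_ }, ?_⟩
  · ext ⟨n, q⟩ <;> simp [Equiv.prodShear]
  · intro a b
    ext ⟨n, q⟩ <;> simp [Equiv.prodShear, add_assoc, add_comm]
  · intro a b hab
    have h : ∀ n q, e (Multiplicative.toAdd a) n + q = e (Multiplicative.toAdd b) n + q := by
      intro n q
      have := congrArg (fun (f : Equiv.Perm (ℕ × ℚ)) => (f (n, q)).2) hab
      simpa [Equiv.prodShear] using this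
    have he : e (Multiplicative.toAdd a) = e (Multiplicative.toAdd b) := by
      funext n; simpa using h n 0
    have := e.injective he
    exact Multiplicative.toAdd.injective this
end

section
/- The circle group ℝ/ℤ admits a faithful action on a countable set. -/
open Cardinal

/-- Translation hom of an additive group into permutations of itself. -/
def transHom (A : Type*) [AddGroup A] : Multiplicative A →* Equiv.Perm A where
  toFun a := Equiv.addLeft a.toAdd
  map_one' := by ext x; simp
  map_mul' a b := by ext x; simp [add_assoc]

theorem transHom_injective (A : Type*) [AddGroup A] : Function.Injective (transHom A) := by
  intro a b h
  have := congrArg (fun e => (e : Equiv.Perm A) 0) h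
  simpa [transHom] using this

/-- Fiberwise translation hom of `ℕ → ℚ` on `Σ _ : ℕ, ℚ`. -/
def fibHom : Multiplicative (ℕ → ℚ) →* Equiv.Perm (Σ _ : ℕ, ℚ) where
  toFun a := Equiv.sigmaCongrRight fun n => Equiv.addLeft (a.toAdd n)
  map_one' := by refine Equiv.ext fun ⟨n, q⟩ => ?_; simp
  map_mul' a b := by refine Equiv.ext fun ⟨n, q⟩ => ?_; simp [add_assoc]

theorem fibHom_injective : Function.Injective fibHom := by
  intro a b h
  have : ∀ n q, (Sigma.mk n (a.toAdd n + q) : Σ _ : ℕ, ℚ) = ⟨n, b.toAdd n + q⟩ := by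
    intro n q
    exact congrArg (fun e => (e : Equiv.Perm (Σ _ : ℕ, ℚ)) ⟨n, q⟩) h
  have h2 : (a.toAdd : ℕ → ℚ) = b.toAdd := by
    funext n
    have := this n 0
    simpa using congrArg (fun p : (Σ _ : ℕ, ℚ) => p.2) this
  exact h2

/-- There is an injective `ℚ`-linear map from any submodule of `ℝ` into `ℚ ^ ℕ`. -/
theorem exists_linear_embedding (W : Submodule ℚ ℝ) :
    ∃ g : W →ₗ[ℚ] (ℕ → ℚ), Function.Injective g := by
  have hrank : Module.rank ℚ W ≤ Module.rank ℚ (ℕ → ℚ) := by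
    have h1 : Module.rank ℚ W ≤ Module.rank ℚ ℝ := Submodule.rank_le W
    have h2 : Module.rank ℚ ℝ ≤ #ℝ := rank_le_card ℚ ℝ
    have h3 : (#ℝ : Cardinal) ≤ #(ℕ → ℚ) := by
      calc (#ℝ) = 2 ^ (ℵ₀ : Cardinal) := by rw [Cardinal.mk_real, ← Cardinal.two_power_aleph0]
      _ ≤ (ℵ₀ : Cardinal) ^ (ℵ₀ : Cardinal) :=
          Cardinal.power_le_power_right (by simpa using (Cardinal.nat_lt_aleph0 2).le)
      _ = #(ℕ → ℚ) := by rw [Cardinal.mk_arrow]; simp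
    have h4 : #(ℕ → ℚ) = Module.rank ℚ (ℕ → ℚ) := (rank_fun_infinite).symm
    exact h1.trans (h2.trans (h3.trans_eq h4))
  -- choose bases
  let b := Module.Basis.ofVectorSpace ℚ W
  let c := Module.Basis.ofVectorSpace ℚ (ℕ → ℚ)
  have hc : #(Module.Basis.ofVectorSpaceIndex ℚ W) ≤ #(Module.Basis.ofVectorSpaceIndex ℚ (ℕ → ℚ)) := by
    rwa [b.mk_eq_rank'', c.mk_eq_rank'']
  obtain ⟨f⟩ := Cardinal.le_def _ _ |>.mp hc
  refine ⟨(c.repr.symm.toLinearMap.comp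
      (Finsupp.lmapDomain ℚ ℚ f)).comp b.repr.toLinearMap, ?_⟩
  simp only [LinearMap.coe_comp, LinearEquiv.coe_coe]
  refine (c.repr.symm.injective.comp ?_).comp b.repr.injective
  intro u v huv
  simp only [Finsupp.lmapDomain_apply] at huv
  exact Finsupp.mapDomain_injective f.injective huv

theorem exists_embedding_hom :
    ∃ h : (ℝ ⧸ AddSubgroup.zmultiples (1 : ℝ)) →+
        (ℚ ⧸ AddSubgroup.zmultiples (1 : ℚ)) × (ℕ → ℚ),
      Function.Injective h := by
  set S : Submodule ℚ ℝ := ℚ ∙ (1 : ℝ) with hS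
  obtain ⟨W, hW⟩ := Submodule.exists_isCompl S
  obtain ⟨g, hg⟩ := exists_linear_embedding W
  let e₁ : ℚ ≃ₗ[ℚ] S := LinearEquiv.toSpanNonzeroSingleton ℚ ℝ 1 one_ne_zero
  let pS : ℝ →ₗ[ℚ] S := Submodule.projectionOnto S W hW
  let pW : ℝ →ₗ[ℚ] W := Submodule.projectionOnto W S hW.symm
  let π : ℚ →+ ℚ ⧸ AddSubgroup.zmultiples (1 : ℚ) := QuotientAddGroup.mk' _
  let F : ℝ →+ (ℚ ⧸ AddSubgroup.zmultiples (1 : ℚ)) × (ℕ → ℚ) :=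
    { toFun := fun x => (π (e₁.symm (pS x)), g (pW x))
      map_zero' := by simp
      map_add' := by intro x y; simp [Prod.ext_iff] }
  have hker : ∀ x : ℝ, F x = 0 ↔ x ∈ AddSubgroup.zmultiples (1 : ℝ) := by
    intro x
    constructor
    · intro hx
      have h1 : π (e₁.symm (pS x)) = 0 := congrArg Prod.fst hx
      have h2 : g (pW x) = 0 := congrArg Prod.snd hx
      have hpW : pW x = 0 := hg (by rw [h2, map_zero])
      have hq : e₁.symm (pS x) ∈ AddSubgroup.zmultiples (1 : ℚ) :=
        (QuotientAddGroup.eq_zero_iff _).mp h1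
      obtain ⟨n, hn⟩ := hq
      have hn' : (n : ℤ) • (1 : ℚ) = e₁.symm (pS x) := hn
      have hx2 : x = ((pS x : ℝ)) := by
        have : ((pS x : ℝ)) + ((pW x : ℝ)) = x := Submodule.projection_add_projection_eq_self hW x
        rw [hpW] at this
        simpa using this.symm
      have he : pS x = e₁ ((n : ℤ) • (1 : ℚ)) := by rw [hn', e₁.apply_symm_apply]
      have hcoe : ((pS x : ℝ)) = (n : ℤ) • (1 : ℝ) := by
        rw [he]
        simp only [e₁, map_zsmul, LinearEquiv.toSpanNonzeroSingleton_apply,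
          SetLike.val_smul, Submodule.coe_smul_of_tower]
        rw [LinearEquiv.toSpanNonzeroSingleton_one]
      exact ⟨n, (hx2.trans hcoe).symm⟩
    · rintro ⟨n, hn⟩
      have hn' : (n : ℤ) • (1 : ℝ) = x := hn
      have hmem : x ∈ S := by
        rw [← hn']
        exact zsmul_mem (Submodule.mem_span_singleton_self (1 : ℝ)) n
      have hpS : pS x = ⟨x, hmem⟩ := Submodule.projectionOnto_apply_left hW ⟨x, hmem⟩
      have hpW : pW x = 0 := Submodule.projectionOnto_apply_of_mem_right hW.symm hmem
      have key : e₁ ((n : ℤ) • (1 : ℚ)) = pS x := by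
        rw [hpS]
        apply Subtype.ext
        show ((e₁ ((n : ℤ) • (1 : ℚ)) : S) : ℝ) = x
        rw [← hn']
        simp only [e₁, map_zsmul, SetLike.val_smul, Submodule.coe_smul_of_tower]
        rw [LinearEquiv.toSpanNonzeroSingleton_one]
      have hsymm : e₁.symm (pS x) = (n : ℤ) • (1 : ℚ) := by
        rw [← key, e₁.symm_apply_apply]
      have hfst : π (e₁.symm (pS x)) = 0 := by
        rw [hsymm]
        exact (QuotientAddGroup.eq_zero_iff _).mpr ⟨n, rfl⟩
      have hsnd : g (pW x) = 0 := by rw [hpW, map_zero]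
      exact Prod.ext hfst hsnd
  refine ⟨QuotientAddGroup.lift _ F (fun x hx => (hker x).mpr hx), ?_⟩
  intro a b hab
  induction a using QuotientAddGroup.induction_on
  induction b using QuotientAddGroup.induction_on
  rename_i x y
  rw [QuotientAddGroup.eq]
  refine (hker _).mp ?_
  rw [map_add, map_neg]
  change F x = F y at hab
  rw [hab]; simp

/-- The circle group `ℝ/ℤ` admits a faithful action on a countable set. -/
theorem circle_countably_representable :
    ∃ (X : Type) (_ : Countable X)
      (φ : Multiplicative (ℝ ⧸ AddSubgroup.zmultiples (1 : ℝ)) →* Equiv.Perm X),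
      Function.Injective φ := by
  obtain ⟨h, hinj⟩ := exists_embedding_hom
  set A₁ := ℚ ⧸ AddSubgroup.zmultiples (1 : ℚ)
  let X : Type := A₁ ⊕ (Σ _ : ℕ, ℚ)
  -- combine the two faithful actions into one on the sum
  let ψ : Multiplicative (A₁ × (ℕ → ℚ)) →* Equiv.Perm A₁ × Equiv.Perm (Σ _ : ℕ, ℚ) :=
    MonoidHom.prod
      ((transHom A₁).comp (AddMonoidHom.toMultiplicative (AddMonoidHom.fst A₁ (ℕ → ℚ))))
      (fibHom.comp (AddMonoidHom.toMultiplicative (AddMonoidHom.snd A₁ (ℕ → ℚ))))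
  let Φ : Multiplicative (A₁ × (ℕ → ℚ)) →* Equiv.Perm X :=
    (Equiv.Perm.sumCongrHom A₁ (Σ _ : ℕ, ℚ)).comp ψ
  have hΦ : Function.Injective Φ := by
    refine Equiv.Perm.sumCongrHom_injective.comp ?_
    intro a b hab
    have f1 := transHom_injective A₁ (congrArg Prod.fst hab)
    have f2 := fibHom_injective (congrArg Prod.snd hab)
    have e1 : (a.toAdd).1 = (b.toAdd).1 := congrArg Multiplicative.toAdd f1
    have e2 : (a.toAdd).2 = (b.toAdd).2 := congrArg Multiplicative.toAdd f2
    exact Multiplicative.toAdd.injective (Prod.ext e1 e2)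
  haveI hA₁c : Countable A₁ :=
    (QuotientAddGroup.mk'_surjective (AddSubgroup.zmultiples (1 : ℚ))).countable
  have hXc : Countable X := inferInstanceAs (Countable (A₁ ⊕ (Σ _ : ℕ, ℚ)))
  refine ⟨X, hXc, Φ.comp (AddMonoidHom.toMultiplicative h), ?_⟩
  exact hΦ.comp (fun a b hab => by
    apply Multiplicative.toAdd.injective
    exact hinj (congrArg Multiplicative.toAdd hab))
end

section
/- Let G be a group with center containing an element c, generated by a family {a_i, b_i : i ∈ I} ∪ {c} with I uncountable, such that all generators commute except [a_i, b_i] = c for each i ∈ I. Then for every action of G on a countable set X, the element c acts trivially on X. -/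
open scoped commutatorElement

/-- Let `G` be a group with a central element `c`, generated by a family
`{a_i, b_i : i ∈ I} ∪ {c}` with `I` uncountable, in which all generators commute except that
`⁅a i, b i⁆ = c` for each `i`.  Then in every action of `G` on a countable set, `c` acts
trivially. -/
theorem churkin_central_element_acts_trivially {G : Type*} [Group G]
    {I : Type*} [Uncountable I] (a b : I → G) (c : G)
    (hc : c ∈ Subgroup.center G)
    (hgen : Subgroup.closure (Set.range a ∪ Set.range b ∪ {c}) = ⊤)
    (haa : ∀ i j, Commute (a i) (a j))
    (hbb : ∀ i j, Commute (b i) (b j))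
    (hab : ∀ i j, i ≠ j → Commute (a i) (b j))
    (hrel : ∀ i, ⁅a i, b i⁆ = c)
    (X : Type*) [Countable X] [MulAction G X] :
    ∀ x : X, c • x = x := by
  intro x
  classical
  set f : I → X × X := fun i => (a i • x, b i • x) with hf
  -- some fiber of f is infinite
  have hfib : ∃ p, (f ⁻¹' {p}).Infinite := by
    by_contra h
    push_neg at h
    have hcov : (Set.univ : Set I) = ⋃ p : X × X, f ⁻¹' {p} := by
      ext i; simp
    have hcnt : (Set.univ : Set I).Countable := by
      rw [hcov]
      exact Set.countable_iUnion fun p => (h p).countable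
    exact (not_countable (α := I)) (Set.countable_univ_iff.mp hcnt)
  obtain ⟨p, hp⟩ := hfib
  obtain ⟨i, hi⟩ := hp.nonempty
  have hp1 : ((f ⁻¹' {p}) \ {i}).Infinite := hp.diff (Set.finite_singleton i)
  obtain ⟨j, hj⟩ := hp1.nonempty
  have hp2 : (((f ⁻¹' {p}) \ {i} : Set I) \ ({j} : Set I)).Infinite := hp1.diff (Set.finite_singleton j)
  obtain ⟨k, hk⟩ := hp2.nonempty
  have hji : j ≠ i := by simpa using hj.2
  have hkj : k ≠ j := by simpa using hk.2
  have hki : k ≠ i := by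
    have := hk.1.2; simpa using this
  have hfi : f i = p := hi
  have hfj : f j = p := hj.1
  have hfk : f k = p := hk.1.1
  have ha' : a j • x = a i • x := congrArg Prod.fst (hfj.trans hfi.symm)
  have hb' : b k • x = b i • x := congrArg Prod.snd (hfk.trans hfi.symm)
  set u := (a j)⁻¹ * a i with hu_def
  set v := (b k)⁻¹ * b i with hv_def
  have hu : u • x = x := by rw [hu_def, mul_smul, ← ha', inv_smul_smul]
  have hv : v • x = x := by rw [hv_def, mul_smul, ← hb', inv_smul_smul]
  -- commutation facts
  have h1 : Commute (a i) (b k) := hab i k hki.symm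
  have h2 : Commute (a j) (b k) := hab j k hkj.symm
  have h3 : Commute (a j) (b i) := hab j i hji
  have hrel' : a i * b i = c * (b i * a i) := by
    rw [← hrel i]; group
  have hcent : ∀ g : G, g * c = c * g := fun g =>
    (Subgroup.mem_center_iff.mp hc) g
  have hcomm : u * v = c * (v * u) := by
    calc u * v = (a j)⁻¹ * ((b k)⁻¹ * (a i * b i)) := by
          rw [hu_def, hv_def]
          rw [mul_assoc, ← mul_assoc (a i), h1.inv_right.eq]
          group
      _ = (a j)⁻¹ * ((b k)⁻¹ * (c * (b i * a i))) := by rw [hrel']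
      _ = c * ((a j)⁻¹ * ((b k)⁻¹ * (b i * a i))) := by
          rw [← mul_assoc, ← mul_assoc, hcent (((a j))⁻¹ * (b k)⁻¹)]
          group
      _ = c * (v * u) := by
          rw [hv_def, hu_def]
          have e2 : (a j)⁻¹ * (b k)⁻¹ = (b k)⁻¹ * (a j)⁻¹ := h2.inv_inv.eq
          have e3 : (a j)⁻¹ * b i = b i * (a j)⁻¹ := h3.inv_left.eq
          rw [← mul_assoc ((a j))⁻¹, e2, mul_assoc, ← mul_assoc ((a j))⁻¹, e3]
          group
  have hc2 : c = u * v * u⁻¹ * v⁻¹ := by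
    rw [hcomm]; group
  rw [hc2, mul_smul, mul_smul, mul_smul]
  have hui : u⁻¹ • x = x := by rw [inv_smul_eq_iff]; exact hu.symm
  have hvi : v⁻¹ • x = x := by rw [inv_smul_eq_iff]; exact hv.symm
  rw [hvi, hui, hv, hu]
end

section
/- Churkin's group G = ⟨a_i, b_i, c (i ∈ I) : all generators commute except [a_i, b_i] = c⟩, with I of cardinality continuum, is nilpotent of class 2, has cardinality continuum, and is not countably representable (admits no faithful action on a countable set). -/
/-- Generators of Churkin's group: `a i`, `b i` for `i ∈ I`, and the central element `c`. -/
abbrev ChurkinGenerators (I : Type) := I ⊕ I ⊕ Unit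

open scoped commutatorElement

/-- The relators of Churkin's presentation: all generators commute, except that
`⁅a i, b i⁆ = c` for every `i`. -/
def churkinRels (I : Type) : Set (FreeGroup (ChurkinGenerators I)) :=
  let a : I → FreeGroup (ChurkinGenerators I) := fun i => FreeGroup.of (Sum.inl i)
  let b : I → FreeGroup (ChurkinGenerators I) := fun i => FreeGroup.of (Sum.inr (Sum.inl i))
  let c : FreeGroup (ChurkinGenerators I) := FreeGroup.of (Sum.inr (Sum.inr ()))
  {r | (∃ i j, r = ⁅a i, a j⁆) ∨ (∃ i j, r = ⁅b i, b j⁆) ∨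
      (∃ i j, i ≠ j ∧ r = ⁅a i, b j⁆) ∨ (∃ i, r = ⁅a i, c⁆) ∨ (∃ i, r = ⁅b i, c⁆) ∨
      (∃ i, r = ⁅a i, b i⁆ * c⁻¹)}

/-- Churkin's group, presented by generators `a i, b i, c` (`i ∈ I`) where all generators
commute except `⁅a i, b i⁆ = c`. -/
abbrev ChurkinGroup (I : Type) := PresentedGroup (churkinRels I)

namespace Churkin

/-! ### The concrete model `E`: a central extension of `ℤ` by a bilinear cocycle. -/

@[ext]
structure E (I : Type) where
  z : ℤ
  p : I →₀ ℤ
  q : I →₀ ℤ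

variable {I : Type}

/-- The bilinear form `∑ i, p i * q i`. -/
def dot (p q : I →₀ ℤ) : ℤ := p.sum fun i n => n * q i

@[simp] lemma dot_zero_left (q : I →₀ ℤ) : dot 0 q = 0 := Finsupp.sum_zero_index

@[simp] lemma dot_zero_right (p : I →₀ ℤ) : dot p 0 = 0 := by simp [dot]

@[simp] lemma dot_add_left (p p' q : I →₀ ℤ) : dot (p + p') q = dot p q + dot p' q :=
  Finsupp.sum_add_index' (by simp) (by intros; ring)

@[simp] lemma dot_add_right (p q q' : I →₀ ℤ) : dot p (q + q') = dot p q + dot p q' := by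
  simp [dot, mul_add, Finsupp.sum_add]

@[simp] lemma dot_neg_left (p q : I →₀ ℤ) : dot (-p) q = -dot p q := by
  have h := dot_add_left (-p) p q
  simp only [neg_add_cancel, dot_zero_left] at h
  linarith

@[simp] lemma dot_neg_right (p q : I →₀ ℤ) : dot p (-q) = -dot p q := by
  have h := dot_add_right p (-q) q
  simp only [neg_add_cancel, dot_zero_right] at h
  linarith

@[simp] lemma dot_single_left (i : I) (n : ℤ) (q : I →₀ ℤ) :
    dot (Finsupp.single i n) q = n * q i :=
  Finsupp.sum_single_index (by simp)

instance : One (E I) := ⟨⟨0, 0, 0⟩⟩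
noncomputable instance : Mul (E I) := ⟨fun g h => ⟨g.z + h.z + dot g.p h.q, g.p + h.p, g.q + h.q⟩⟩
noncomputable instance : Inv (E I) := ⟨fun g => ⟨-g.z + dot g.p g.q, -g.p, -g.q⟩⟩

@[simp] lemma one_z : (1 : E I).z = 0 := rfl
@[simp] lemma one_p : (1 : E I).p = 0 := rfl
@[simp] lemma one_q : (1 : E I).q = 0 := rfl
@[simp] lemma mul_z (g h : E I) : (g * h).z = g.z + h.z + dot g.p h.q := rfl
@[simp] lemma mul_p (g h : E I) : (g * h).p = g.p + h.p := rfl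
@[simp] lemma mul_q (g h : E I) : (g * h).q = g.q + h.q := rfl
@[simp] lemma inv_z (g : E I) : (g⁻¹).z = -g.z + dot g.p g.q := rfl
@[simp] lemma inv_p (g : E I) : (g⁻¹).p = -g.p := rfl
@[simp] lemma inv_q (g : E I) : (g⁻¹).q = -g.q := rfl

noncomputable instance : Group (E I) where
  mul_assoc a b c := by ext <;> simp <;> ring
  one_mul a := by ext <;> simp
  mul_one a := by ext <;> simp
  inv_mul_cancel a := by ext <;> simp

lemma commutator_eq (g h : E I) : ⁅g, h⁆ = ⟨dot g.p h.q - dot h.p g.q, 0, 0⟩ := by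
  ext <;> simp [commutatorElement_def] <;> ring

/-- The images of the generators in `E`. -/
noncomputable def gen : ChurkinGenerators I → E I
  | .inl i => ⟨0, Finsupp.single i 1, 0⟩
  | .inr (.inl i) => ⟨0, 0, Finsupp.single i 1⟩
  | .inr (.inr _) => ⟨1, 0, 0⟩

lemma gen_rels : ∀ r ∈ churkinRels I, FreeGroup.lift gen r = 1 := by
  have hsimp : ∀ x, FreeGroup.lift (gen (I := I)) (FreeGroup.of x) = gen x :=
    fun x => FreeGroup.lift_apply_of
  rintro r (⟨i, j, rfl⟩ | ⟨i, j, rfl⟩ | ⟨i, j, hij, rfl⟩ | ⟨i, rfl⟩ | ⟨i, rfl⟩ | ⟨i, rfl⟩)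
  · rw [map_commutatorElement, hsimp, hsimp]; ext <;> simp [gen, commutator_eq]
  · rw [map_commutatorElement, hsimp, hsimp]; ext <;> simp [gen, commutator_eq]
  · rw [map_commutatorElement, hsimp, hsimp]
    ext <;> simp [gen, commutator_eq, Finsupp.single_apply, Ne.symm hij]
  · rw [map_commutatorElement, hsimp, hsimp]; ext <;> simp [gen, commutator_eq]
  · rw [map_commutatorElement, hsimp, hsimp]; ext <;> simp [gen, commutator_eq]
  · rw [map_mul, map_inv, map_commutatorElement, hsimp, hsimp, hsimp]
    ext <;> simp [gen, commutator_eq]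

/-- The canonical hom from Churkin's group to the model `E`. -/
noncomputable def π : ChurkinGroup I →* E I := PresentedGroup.toGroup gen_rels

/-- Projection of `E` onto the (multiplicative) free abelian group of `a`-exponents. -/
noncomputable def prHom : E I →* Multiplicative (I →₀ ℤ) where
  toFun g := Multiplicative.ofAdd g.p
  map_one' := rfl
  map_mul' _ _ := rfl

/-! ### Generators of the Churkin group and relations among them. -/

def A (i : I) : ChurkinGroup I := PresentedGroup.of (Sum.inl i)
def B (i : I) : ChurkinGroup I := PresentedGroup.of (Sum.inr (Sum.inl i))
def C (I : Type) : ChurkinGroup I := PresentedGroup.of (Sum.inr (Sum.inr ()))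

lemma rel_one {r : FreeGroup (ChurkinGenerators I)} (hr : r ∈ churkinRels I) :
    PresentedGroup.mk (churkinRels I) r = 1 :=
  (QuotientGroup.eq_one_iff r).2 (Subgroup.subset_normalClosure hr)

lemma commAA (i j : I) : Commute (A i) (A j) := by
  have h := rel_one (I := I) (Or.inl ⟨i, j, rfl⟩)
  rw [map_commutatorElement] at h
  exact commutatorElement_eq_one_iff_commute.mp h

lemma commBB (i j : I) : Commute (B i) (B j) := by
  have h := rel_one (I := I) (Or.inr (Or.inl ⟨i, j, rfl⟩))
  rw [map_commutatorElement] at h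
  exact commutatorElement_eq_one_iff_commute.mp h

lemma commAB {i j : I} (hij : i ≠ j) : Commute (A i) (B j) := by
  have h := rel_one (I := I) (Or.inr (Or.inr (Or.inl ⟨i, j, hij, rfl⟩)))
  rw [map_commutatorElement] at h
  exact commutatorElement_eq_one_iff_commute.mp h

lemma commAC (i : I) : Commute (A i) (C I) := by
  have h := rel_one (I := I) (Or.inr (Or.inr (Or.inr (Or.inl ⟨i, rfl⟩))))
  rw [map_commutatorElement] at h
  exact commutatorElement_eq_one_iff_commute.mp h

lemma commBC (i : I) : Commute (B i) (C I) := by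
  have h := rel_one (I := I) (Or.inr (Or.inr (Or.inr (Or.inr (Or.inl ⟨i, rfl⟩)))))
  rw [map_commutatorElement] at h
  exact commutatorElement_eq_one_iff_commute.mp h

lemma relABC (i : I) : ⁅A i, B i⁆ = C I := by
  have h := rel_one (I := I) (Or.inr (Or.inr (Or.inr (Or.inr (Or.inr ⟨i, rfl⟩)))))
  rw [map_mul, map_inv, map_commutatorElement] at h
  exact mul_inv_eq_one.mp h

lemma central (g : ChurkinGroup I) : Commute (C I) g := by
  have hle : (⊤ : Subgroup (ChurkinGroup I)) ≤ Subgroup.centralizer {C I} := by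
    rw [← PresentedGroup.closure_range_of (churkinRels I)]
    refine (Subgroup.closure_le _).2 ?_
    rintro _ ⟨x, rfl⟩
    rw [SetLike.mem_coe, Subgroup.mem_centralizer_iff]
    rintro u hu
    rw [Set.mem_singleton_iff] at hu; subst hu
    match x with
    | .inl i => exact (commAC i).symm.eq
    | .inr (.inl i) => exact (commBC i).symm.eq
    | .inr (.inr _) => rfl
  have hg := hle (Subgroup.mem_top g)
  rw [Subgroup.mem_centralizer_iff] at hg
  exact hg _ rfl

/-! ### Generic group-theoretic lemmas. -/

/-- If a group is generated by a pairwise-commuting set, any two elements commute. -/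
lemma commute_of_closure {G : Type*} [Group G] {S : Set G} (hS : Subgroup.closure S = ⊤)
    (hcomm : ∀ x ∈ S, ∀ y ∈ S, Commute x y) (x y : G) : Commute x y := by
  have step : ∀ s ∈ S, ∀ g : G, Commute s g := by
    intro s hs g
    have hle : (⊤ : Subgroup G) ≤ Subgroup.centralizer {s} := by
      rw [← hS]
      refine (Subgroup.closure_le _).2 ?_
      intro t ht
      rw [SetLike.mem_coe, Subgroup.mem_centralizer_iff]
      intro u hu
      rw [Set.mem_singleton_iff] at hu; subst hu
      exact (hcomm _ hs _ ht).eq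
    have hg := hle (Subgroup.mem_top g)
    rw [Subgroup.mem_centralizer_iff] at hg
    exact hg _ rfl
  have hle : (⊤ : Subgroup G) ≤ Subgroup.centralizer {x} := by
    rw [← hS]
    refine (Subgroup.closure_le _).2 ?_
    intro t ht
    rw [SetLike.mem_coe, Subgroup.mem_centralizer_iff]
    intro u hu
    rw [Set.mem_singleton_iff] at hu
    rw [hu]
    exact ((step t ht x).symm).eq
  have hy := hle (Subgroup.mem_top y)
  rw [Subgroup.mem_centralizer_iff] at hy
  exact hy _ rfl

/-- The key commutator identity: if `c` is central, `⁅a,b⁆ = ⁅a',b'⁆ = c`, and the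
cross pairs commute, then `⁅a * a'⁻¹, b * b'⁻¹⁆ = c ^ 2`. -/
lemma key_comm {G : Type*} [Group G] {a a' b b' c : G}
    (hc : ∀ g, Commute c g)
    (ha'b : Commute a' b) (hab' : Commute a b')
    (h1 : ⁅a, b⁆ = c) (h2 : ⁅a', b'⁆ = c) :
    ⁅a * a'⁻¹, b * b'⁻¹⁆ = c ^ 2 := by
  have h1' : a * b = c * (b * a) := by rw [← h1]; group
  have h2' : a'⁻¹ * b'⁻¹ = c * (b'⁻¹ * a'⁻¹) := by
    have hconj : ⁅a'⁻¹, b'⁻¹⁆ = (b' * a')⁻¹ * ⁅a', b'⁆ * (b' * a') := by group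
    rw [h2] at hconj
    rw [← (hc (b' * a')⁻¹).eq] at hconj
    have hconj' : ⁅a'⁻¹, b'⁻¹⁆ = c := by rw [hconj]; group
    rw [← hconj']; group
  set w := a * b * b'⁻¹ * a'⁻¹ with hw
  have e1 : (a * a'⁻¹) * (b * b'⁻¹) = c * w := by
    calc (a * a'⁻¹) * (b * b'⁻¹) = a * (a'⁻¹ * b) * b'⁻¹ := by group
      _ = a * (b * a'⁻¹) * b'⁻¹ := by rw [ha'b.inv_left.eq]
      _ = a * b * (a'⁻¹ * b'⁻¹) := by group
      _ = a * b * (c * (b'⁻¹ * a'⁻¹)) := by rw [h2']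
      _ = a * (b * c) * (b'⁻¹ * a'⁻¹) := by group
      _ = a * (c * b) * (b'⁻¹ * a'⁻¹) := by rw [(hc b).eq]
      _ = (a * c) * (b * (b'⁻¹ * a'⁻¹)) := by group
      _ = (c * a) * (b * (b'⁻¹ * a'⁻¹)) := by rw [(hc a).eq]
      _ = c * w := by rw [hw]; group
  have e2 : (b * b'⁻¹) * (a * a'⁻¹) = c⁻¹ * w := by
    have hba : b * a = c⁻¹ * (a * b) := by rw [h1']; group
    calc (b * b'⁻¹) * (a * a'⁻¹) = b * (b'⁻¹ * a) * a'⁻¹ := by group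
      _ = b * (a * b'⁻¹) * a'⁻¹ := by rw [hab'.symm.inv_left.eq]
      _ = (b * a) * (b'⁻¹ * a'⁻¹) := by group
      _ = (c⁻¹ * (a * b)) * (b'⁻¹ * a'⁻¹) := by rw [hba]
      _ = c⁻¹ * w := by rw [hw]; group
  have key : ⁅a * a'⁻¹, b * b'⁻¹⁆ =
      ((a * a'⁻¹) * (b * b'⁻¹)) * ((b * b'⁻¹) * (a * a'⁻¹))⁻¹ := by group
  rw [key, e1, e2, sq]
  group

lemma perm_commutator_fix {X : Type} (u v : Equiv.Perm X) (x : X)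
    (hu : u x = x) (hv : v x = x) : ⁅u, v⁆ x = x := by
  have hu' : u⁻¹ x = x := by
    conv_lhs => rw [← hu]
    exact Equiv.symm_apply_apply u x
  have hv' : v⁻¹ x = x := by
    conv_lhs => rw [← hv]
    exact Equiv.symm_apply_apply v x
  simp [commutatorElement_def, Equiv.Perm.mul_apply, hu, hv, hu', hv']

end Churkin

open Churkin in
/-- Churkin's group, with an index set `I` of cardinality continuum, is nilpotent of
class exactly `2`, has cardinality continuum, and is not countably representable. -/
theorem churkinGroup_nilpotent_continuum_not_countably_representable
    (I : Type) (hI : Cardinal.mk I = Cardinal.continuum) :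
    Group.IsNilpotent (ChurkinGroup I) ∧
    Subgroup.lowerCentralSeries (⊤ : Subgroup (ChurkinGroup I)) 2 = ⊥ ∧
    Subgroup.lowerCentralSeries (⊤ : Subgroup (ChurkinGroup I)) 1 ≠ ⊥ ∧
    Cardinal.mk (ChurkinGroup I) = Cardinal.continuum ∧
    ¬ ∃ (X : Type) (_ : Countable X) (φ : ChurkinGroup I →* Equiv.Perm X),
        Function.Injective φ := by
  classical
  have hIinf : Infinite I := Cardinal.infinite_iff.2 (by
    rw [hI]; exact Cardinal.aleph0_le_continuum)
  have hInonempty : Nonempty I := inferInstance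
  obtain ⟨i₀⟩ := hInonempty
  -- `C ≠ 1` and `C ^ 2 ≠ 1`, via the model `E`.
  have hπC : π (C I) = ⟨1, 0, 0⟩ := PresentedGroup.toGroup.of gen_rels
  have hCne : C I ≠ 1 := by
    intro h
    have := congrArg (fun g => (π g).z) h
    simpa [hπC] using this
  have hC2ne : C I ^ 2 ≠ 1 := by
    intro h
    have h2 := congrArg (fun g : ChurkinGroup I => (π g).z) h
    simp only [map_pow, map_one, hπC] at h2
    rw [pow_two] at h2
    simp at h2
  -- N = ⟨C⟩ is central, and contains all commutators.
  set N : Subgroup (ChurkinGroup I) := Subgroup.closure {C I} with hN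
  have hNle : N ≤ Subgroup.center (ChurkinGroup I) := by
    refine (Subgroup.closure_le _).2 ?_
    rintro x hx
    rw [Set.mem_singleton_iff] at hx; subst hx
    exact Subgroup.mem_center_iff.2 fun g => (central g).symm.eq
  haveI hNnormal : N.Normal := ⟨by
    intro n hn g
    have h := Subgroup.mem_center_iff.1 (hNle hn) g
    rw [h, mul_assoc, mul_inv_cancel, mul_one]
    exact hn⟩
  -- the quotient by N is abelian
  have hquot : ∀ x y : ChurkinGroup I ⧸ N, Commute x y := by
    set f := QuotientGroup.mk' N with hf
    set S : Set (ChurkinGroup I ⧸ N) :=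
      Set.range (fun x : ChurkinGenerators I => f (PresentedGroup.of x)) with hS
    have hCone : f (C I) = 1 :=
      (QuotientGroup.eq_one_iff _).2 (Subgroup.subset_closure rfl)
    have hSclos : Subgroup.closure S = ⊤ := by
      have hSim : S = f '' Set.range (PresentedGroup.of (rels := churkinRels I)) := by
        rw [← Set.range_comp]; rfl
      rw [hSim, ← MonoidHom.map_closure, PresentedGroup.closure_range_of]
      exact Subgroup.map_top_of_surjective _ (QuotientGroup.mk'_surjective N)
    refine commute_of_closure hSclos ?_
    rintro _ ⟨x, rfl⟩ _ ⟨y, rfl⟩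
    have hABcase : ∀ i j : I,
        Commute (f (PresentedGroup.of (Sum.inl i))) (f (PresentedGroup.of (Sum.inr (Sum.inl j)))) := by
      intro i j
      by_cases hij : i = j
      · subst hij
        refine commutatorElement_eq_one_iff_commute.1 ?_
        rw [← map_commutatorElement]
        show f ⁅A i, B i⁆ = 1
        rw [relABC i]
        exact hCone
      · exact (commAB hij).map f
    match x, y with
    | .inl i, .inl j => exact (commAA i j).map f
    | .inl i, .inr (.inl j) => exact hABcase i j
    | .inl i, .inr (.inr _) => exact (commAC i).map f
    | .inr (.inl i), .inl j => exact (hABcase j i).symm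
    | .inr (.inl i), .inr (.inl j) => exact (commBB i j).map f
    | .inr (.inl i), .inr (.inr _) => exact (commBC i).map f
    | .inr (.inr _), .inl j => exact ((commAC j).map f).symm
    | .inr (.inr _), .inr (.inl j) => exact ((commBC j).map f).symm
    | .inr (.inr _), .inr (.inr _) => exact Commute.refl _
  have hcommN : ∀ g h : ChurkinGroup I, ⁅g, h⁆ ∈ N := by
    intro g h
    have h1 : (QuotientGroup.mk' N) ⁅g, h⁆ = 1 := by
      rw [map_commutatorElement]
      exact commutatorElement_eq_one_iff_commute.2 (hquot _ _)
    exact (QuotientGroup.eq_one_iff _).1 h1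
  have hlcs1 : Subgroup.lowerCentralSeries (⊤ : Subgroup (ChurkinGroup I)) 1 ≤ N := by
    rw [Subgroup.top_lowerCentralSeries_one, commutator_def]
    exact Subgroup.commutator_le.2 fun g _ h _ => hcommN g h
  have hlcs2 : Subgroup.lowerCentralSeries (⊤ : Subgroup (ChurkinGroup I)) 2 = ⊥ := by
    show Subgroup.lowerCentralSeries (⊤ : Subgroup (ChurkinGroup I)) (1 + 1) = ⊥
    rw [Subgroup.lowerCentralSeries_succ, eq_bot_iff]
    refine Subgroup.commutator_le.2 ?_
    intro g hg h _
    rw [Subgroup.mem_bot]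
    refine commutatorElement_eq_one_iff_commute.2 ?_
    exact (Subgroup.mem_center_iff.1 (hNle (hlcs1 hg)) h).symm
  refine ⟨Subgroup.nilpotent_iff_lowerCentralSeries.2 ⟨2, hlcs2⟩, hlcs2, ?_, ?_, ?_⟩
  · -- lcs 1 ≠ ⊥
    intro hbot
    have hCmem : C I ∈ Subgroup.lowerCentralSeries (⊤ : Subgroup (ChurkinGroup I)) 1 := by
      rw [Subgroup.top_lowerCentralSeries_one, commutator_def, ← relABC i₀]
      exact Subgroup.commutator_mem_commutator (Subgroup.mem_top _) (Subgroup.mem_top _)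
    rw [hbot] at hCmem
    exact hCne (Subgroup.mem_bot.1 hCmem)
  · -- cardinality
    have hπof : ∀ x : ChurkinGenerators I, (π : ChurkinGroup I →* E I) (PresentedGroup.of x) = gen x :=
      fun x => PresentedGroup.toGroup.of gen_rels
    have hsurj : ∀ m : I →₀ ℤ,
        ∃ g : ChurkinGroup I, (prHom.comp π) g = Multiplicative.ofAdd m := by
      intro m
      induction m using Finsupp.induction with
      | zero => exact ⟨1, by rw [map_one]; rfl⟩
      | single_add a n fm hfm hn ih =>
        obtain ⟨g, hg⟩ := ih
        refine ⟨A a ^ n * g, ?_⟩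
        rw [map_mul, map_zpow, hg]
        have hAa : (prHom.comp π) (A a) = Multiplicative.ofAdd (Finsupp.single a 1) := by
          rw [MonoidHom.comp_apply]
          show prHom (π (PresentedGroup.of (Sum.inl a))) = _
          rw [hπof]
          rfl
        rw [hAa, ← ofAdd_zsmul, Finsupp.smul_single, smul_eq_mul, mul_one, ← ofAdd_add]
    have hlow : Cardinal.continuum ≤ Cardinal.mk (ChurkinGroup I) := by
      have hs : Function.Surjective (prHom.comp (π : ChurkinGroup I →* E I)) := by
        intro y
        obtain ⟨g, hg⟩ := hsurj y.toAdd
        exact ⟨g, hg⟩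
      have h1 := Cardinal.mk_le_of_surjective hs
      have h2 : Cardinal.mk (Multiplicative (I →₀ ℤ)) = Cardinal.continuum := by
        have : Cardinal.mk (Multiplicative (I →₀ ℤ)) = Cardinal.mk (I →₀ ℤ) := rfl
        rw [this, Cardinal.mk_finsupp_of_infinite, hI, Cardinal.mk_int,
          max_eq_left Cardinal.aleph0_le_continuum]
      rw [← h2]
      exact h1
    have hup : Cardinal.mk (ChurkinGroup I) ≤ Cardinal.continuum := by
      have h1 := Cardinal.mk_le_of_surjective (PresentedGroup.mk_surjective (churkinRels I))
      have hgen : Cardinal.mk (ChurkinGenerators I) = Cardinal.continuum := by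
        show Cardinal.mk (I ⊕ I ⊕ Unit) = Cardinal.continuum
        rw [Cardinal.mk_sum, Cardinal.mk_sum, hI]
        simp only [Cardinal.lift_id, Cardinal.mk_fintype, Fintype.card_unit, Nat.cast_one]
        rw [Cardinal.add_eq_left Cardinal.aleph0_le_continuum
            (Cardinal.one_lt_aleph0.le.trans Cardinal.aleph0_le_continuum),
          Cardinal.add_eq_left Cardinal.aleph0_le_continuum le_rfl]
      have h2 : Cardinal.mk (FreeGroup (ChurkinGenerators I)) = Cardinal.continuum := by
        rw [Cardinal.mk_freeGroup, hgen, max_eq_left Cardinal.aleph0_le_continuum]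
      rw [← h2]
      exact h1
    exact le_antisymm hup hlow
  · -- not countably representable
    rintro ⟨X, hX, φ, hφ⟩
    have hone : φ (C I ^ 2) = 1 := by
      ext x
      rw [Equiv.Perm.one_apply]
      -- pigeonhole: two indices act identically on x
      have hninj : ¬ Function.Injective (fun i : I => (φ (A i) x, φ (B i) x)) := by
        intro hinj
        have h1 : Cardinal.mk I ≤ Cardinal.mk (X × X) := Cardinal.mk_le_of_injective hinj
        have h2 : Cardinal.mk (X × X) ≤ Cardinal.aleph0 := Cardinal.mk_le_aleph0
        rw [hI] at h1
        exact Cardinal.aleph0_lt_continuum.not_ge (h1.trans h2)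
      rw [Function.not_injective_iff] at hninj
      obtain ⟨i, j, heq, hij⟩ := hninj
      obtain ⟨hA, hB⟩ := Prod.ext_iff.1 heq
      simp only at hA hB
      have hkey : ⁅A i * (A j)⁻¹, B i * (B j)⁻¹⁆ = C I ^ 2 :=
        key_comm central (commAB (Ne.symm hij)) (commAB hij) (relABC i) (relABC j)
      rw [← hkey, map_commutatorElement]
      apply perm_commutator_fix
      · rw [(commAA i j).inv_right.eq, map_mul, map_inv, Equiv.Perm.mul_apply, hA]
        exact Equiv.symm_apply_apply _ _
      · rw [(commBB i j).inv_right.eq, map_mul, map_inv, Equiv.Perm.mul_apply, hB]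
        exact Equiv.symm_apply_apply _ _
    exact hC2ne (hφ (by rw [hone, map_one]))
end

section
/- Let G be Churkin's group with central generator c and let π : G → H be a homomorphism to a separable Hausdorff topological group H. Then π(c) = 1. -/
open Topology

open scoped commutatorElement

/-- Commutator identity: if `y` commutes with `u` and `v`, and `x` commutes with `v`,
then `⁅x * y⁻¹, u * v⁻¹⁆ = ⁅x, u⁆`. -/
lemma churkin_aux {G : Type*} [Group G] {x y u v c : G} (hyu : Commute y u)
    (hyv : Commute y v) (hxv : Commute x v) (h : ⁅x, u⁆ = c) :
    ⁅x * y⁻¹, u * v⁻¹⁆ = c := by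
  have e1 : y⁻¹ * (u * v⁻¹) = (u * v⁻¹) * y⁻¹ := ((hyu.mul_right hyv.inv_right).inv_left).eq
  have e2 : v⁻¹ * x⁻¹ = x⁻¹ * v⁻¹ := (hxv.inv_right.inv_left).eq.symm
  calc ⁅x * y⁻¹, u * v⁻¹⁆
      = x * (y⁻¹ * (u * v⁻¹)) * (y * (x⁻¹ * (v * u⁻¹))) := by
        rw [commutatorElement_def]; group
    _ = x * ((u * v⁻¹) * y⁻¹) * (y * (x⁻¹ * (v * u⁻¹))) := by rw [e1]
    _ = x * (u * (v⁻¹ * x⁻¹)) * (v * u⁻¹) := by group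
    _ = x * (u * (x⁻¹ * v⁻¹)) * (v * u⁻¹) := by rw [e2]
    _ = ⁅x, u⁆ := by rw [commutatorElement_def]; group
    _ = c := h

/-- Let `G` be Churkin's group with central generator `c` (index set of cardinality
continuum) and let `π : G → H` be a homomorphism to a separable Hausdorff topological
group `H`.  Then `π c = 1`. -/
theorem churkin_central_element_dies_in_separable_group {G : Type*} [Group G]
    {I : Type*} (hI : Cardinal.mk I = Cardinal.continuum) (a b : I → G) (c : G)
    (hc : c ∈ Subgroup.center G)
    (hgen : Subgroup.closure (Set.range a ∪ Set.range b ∪ {c}) = ⊤)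
    (haa : ∀ i j, Commute (a i) (a j))
    (hbb : ∀ i j, Commute (b i) (b j))
    (hab : ∀ i j, i ≠ j → Commute (a i) (b j))
    (hrel : ∀ i, ⁅a i, b i⁆ = c)
    {H : Type*} [Group H] [TopologicalSpace H] [IsTopologicalGroup H] [T2Space H]
    [TopologicalSpace.SeparableSpace H]
    (π : G →* H) :
    π c = 1 := by
  have key : ∀ o : Set H, IsOpen o → (1 : H) ∈ o → π c ∈ o := by
    intro o ho h1o
    obtain ⟨V₁, hV₁o, hV₁1, hV₁⟩ := exists_open_nhds_one_mul_subset (ho.mem_nhds h1o)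
    obtain ⟨V₂, hV₂o, hV₂1, hV₂⟩ := exists_open_nhds_one_mul_subset (hV₁o.mem_nhds hV₁1)
    obtain ⟨V₃, hV₃o, hV₃1, hV₃⟩ := exists_open_nhds_one_mul_subset (hV₂o.mem_nhds hV₂1)
    set W : Set H := V₃ ∩ V₃⁻¹ with hWdef
    have hW1 : (1 : H) ∈ W := ⟨hV₃1, by rw [Set.mem_inv, inv_one]; exact hV₃1⟩
    have hWnhds : W ∈ 𝓝 (1 : H) :=
      Filter.inter_mem (hV₃o.mem_nhds hV₃1) ((hV₃o.inv).mem_nhds (by rw [Set.mem_inv, inv_one]; exact hV₃1))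
    have hWsub : W ⊆ V₃ := Set.inter_subset_left
    have hWsymm : ∀ {x : H}, x ∈ W → x⁻¹ ∈ W := by
      intro x hx
      exact ⟨by simpa using hx.2, by simpa using hx.1⟩
    have p2 : ∀ {g h : H}, g ∈ V₃ → h ∈ V₃ → g * h ∈ V₂ := fun hg hh =>
      hV₃ (Set.mul_mem_mul hg hh)
    have p4 : ∀ {g h : H}, g ∈ V₂ → h ∈ V₂ → g * h ∈ V₁ := fun hg hh =>
      hV₂ (Set.mul_mem_mul hg hh)
    have p8 : ∀ {g h : H}, g ∈ V₁ → h ∈ V₁ → g * h ∈ o := fun hg hh =>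
      hV₁ (Set.mul_mem_mul hg hh)
    obtain ⟨D, hDc, hDd⟩ := TopologicalSpace.exists_countable_dense H
    have approx : ∀ g : H, ∃ d ∈ D, g * d⁻¹ ∈ W := by
      intro g
      have hcont : ContinuousAt (fun x : H => g * x⁻¹) g :=
        (continuous_const.mul continuous_inv).continuousAt
      have hT : (fun x : H => g * x⁻¹) ⁻¹' W ∈ 𝓝 g := by
        apply hcont.preimage_mem_nhds
        simpa using hWnhds
      obtain ⟨d, hdD, hd⟩ := hDd.exists_mem_open isOpen_interior
        ⟨g, mem_interior_iff_mem_nhds.mpr hT⟩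
      have hd' := interior_subset hd
      exact ⟨d, hdD, hd'⟩
    choose da hdaD hda using fun i => approx (π (a i))
    choose db hdbD hdb using fun i => approx (π (b i))
    have hDcnt : Countable ↥D := hDc.to_subtype
    set ψ : I → ↥D × ↥D := fun i => (⟨da i, hdaD i⟩, ⟨db i, hdbD i⟩) with hψdef
    have hfib : ∃ p, (ψ ⁻¹' {p}).Infinite := by
      by_contra hfin
      push_neg at hfin
      have hu : (Set.univ : Set I) = ⋃ p, ψ ⁻¹' {p} := by
        ext i; simp
      have hcU : (Set.univ : Set I).Countable :=
        hu ▸ Set.countable_iUnion (fun p => (hfin p).countable)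
      have hcI : Countable I := Set.countable_univ_iff.mp hcU
      have hle := Cardinal.mk_le_aleph0 (α := I)
      rw [hI] at hle
      exact absurd hle (not_le.mpr Cardinal.aleph0_lt_continuum)
    obtain ⟨p, hp⟩ := hfib
    obtain ⟨i, hi⟩ := hp.nonempty
    have hp' := hp.diff (Set.finite_singleton i)
    obtain ⟨j, hj⟩ := hp'.nonempty
    obtain ⟨k, hk⟩ := (hp'.diff (Set.finite_singleton j)).nonempty
    have hψi : ψ i = p := hi
    have hψj : ψ j = p := hj.1
    have hψk : ψ k = p := hk.1.1
    have hij : i ≠ j := fun h => hj.2 (by simp [← h])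
    have hjk : j ≠ k := fun h => hk.2 (by simp [← h])
    have hik : i ≠ k := fun h => hk.1.2 (by simp [← h])
    have hdaij : da i = da j := by
      have := hψj ▸ hψi
      exact congrArg (fun q : ↥D × ↥D => (q.1 : H)) this
    have hdbik : db i = db k := by
      have := hψk ▸ hψi
      exact congrArg (fun q : ↥D × ↥D => (q.2 : H)) this
    have hcomm : ⁅a i * (a j)⁻¹, b i * (b k)⁻¹⁆ = c :=
      churkin_aux (hab j i hij.symm) (hab j k hjk) (hab i k hik) (hrel i)
    have hπ : π c = (π (a i) * (π (a j))⁻¹) * (π (b i) * (π (b k))⁻¹) *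
        (π (a i) * (π (a j))⁻¹)⁻¹ * (π (b i) * (π (b k))⁻¹)⁻¹ := by
      rw [← hcomm, commutatorElement_def]
      simp [mul_assoc]
    have hp1 : π (a i) * (da i)⁻¹ ∈ W := hda i
    have hq1 : π (a j) * (da i)⁻¹ ∈ W := by rw [hdaij]; exact hda j
    have hr1 : π (b i) * (db i)⁻¹ ∈ W := hdb i
    have hs1 : π (b k) * (db i)⁻¹ ∈ W := by rw [hdbik]; exact hdb k
    set p1 := π (a i) * (da i)⁻¹
    set q1 := π (a j) * (da i)⁻¹
    set r1 := π (b i) * (db i)⁻¹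
    set s1 := π (b k) * (db i)⁻¹
    have hfinal : π c = ((p1 * q1⁻¹) * (r1 * s1⁻¹)) * ((q1 * p1⁻¹) * (s1 * r1⁻¹)) := by
      rw [hπ]
      simp only [p1, q1, r1, s1]
      group
    rw [hfinal]
    exact p8 (p4 (p2 (hWsub hp1) (hWsub (hWsymm hq1)))
              (p2 (hWsub hr1) (hWsub (hWsymm hs1))))
           (p4 (p2 (hWsub hq1) (hWsub (hWsymm hp1)))
              (p2 (hWsub hs1) (hWsub (hWsymm hr1))))
  have h1 : (1 : H) ∈ closure {π c} := by
    rw [mem_closure_iff]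
    intro o ho h1o
    exact ⟨π c, key o ho h1o, rfl⟩
  rw [closure_singleton] at h1
  exact (Set.mem_singleton_iff.mp h1).symm
end

section
/- Every abelian group of cardinality at most 2^ℵ₀ admits a faithful action on a countable set. -/
open Cardinal

universe u

section VectorSpace

private lemma card_pi_nat (F : Type) [Countable F] [Nontrivial F] : #(ℕ → F) = 𝔠 := by
  have h1 : #(ℕ → F) = (#F) ^ (ℵ₀ : Cardinal) := by
    rw [Cardinal.mk_arrow]; simp
  rw [h1]
  apply le_antisymm
  · calc (#F) ^ (ℵ₀ : Cardinal) ≤ (ℵ₀ : Cardinal) ^ (ℵ₀ : Cardinal) :=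
        Cardinal.power_le_power_right (Cardinal.mk_le_aleph0)
    _ = 𝔠 := Cardinal.aleph0_power_aleph0
  · calc (𝔠 : Cardinal) = 2 ^ (ℵ₀ : Cardinal) := Cardinal.two_power_aleph0.symm
    _ ≤ (#F) ^ (ℵ₀ : Cardinal) :=
        Cardinal.power_le_power_right (Cardinal.two_le_iff.2 (exists_pair_ne F))

private lemma exists_linear_inj (F : Type) [Field F] [Countable F] (V : Type u) [AddCommGroup V]
    [Module F V] (hV : #V ≤ Cardinal.continuum.{u}) :
    ∃ f : V →ₗ[F] (ℕ → F), Function.Injective f := by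
  classical
  set W := (ℕ → F) with hW
  let B := Module.Basis.ofVectorSpace F V
  let B' := Module.Basis.ofVectorSpace F W
  set ι := Module.Basis.ofVectorSpaceIndex F V with hι_def
  set ι' := Module.Basis.ofVectorSpaceIndex F W with hι'_def
  have hι : #ι ≤ Cardinal.continuum.{u} := le_trans (Cardinal.mk_subtype_le _) hV
  have hWc : #W = 𝔠 := card_pi_nat F
  have hinf : Infinite ι' := by
    by_contra h
    rw [not_infinite_iff_finite] at h
    have hc : Countable W := (Equiv.countable_iff B'.repr.toEquiv).mpr inferInstance
    have : #W ≤ ℵ₀ := Cardinal.mk_le_aleph0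
    rw [hWc] at this
    exact absurd this (not_le.2 (Cardinal.aleph0_lt_continuum))
  have hι' : #ι' = 𝔠 := by
    have h1 : #(ι' →₀ F) = max (#ι') (#F) := Cardinal.mk_finsupp_of_infinite ι' F
    have h2 : #(ι' →₀ F) = #W := Cardinal.mk_congr B'.repr.toEquiv.symm
    rw [hWc] at h2
    rw [h2] at h1
    rcases max_cases (#ι') (#F) with ⟨he, _⟩ | ⟨he, hlt⟩
    · rw [he] at h1; exact h1.symm
    · exfalso
      rw [he] at h1
      have : #F ≤ ℵ₀ := Cardinal.mk_le_aleph0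
      rw [← h1] at this
      exact absurd this (not_le.2 (Cardinal.aleph0_lt_continuum))
  have hle : Cardinal.lift.{0} (#ι) ≤ Cardinal.lift.{u} (#ι') := by
    rw [hι', Cardinal.lift_continuum]
    calc Cardinal.lift.{0} (#ι) ≤ Cardinal.lift.{0} (Cardinal.continuum.{u}) :=
      Cardinal.lift_le.mpr hι
    _ = Cardinal.continuum.{u} := by simp
  obtain ⟨g⟩ := Cardinal.lift_mk_le'.mp hle
  refine ⟨(B'.repr.symm.toLinearMap.comp (Finsupp.lmapDomain F F g)).comp B.repr.toLinearMap, ?_⟩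
  simp only [LinearMap.coe_comp, LinearEquiv.coe_coe]
  refine B'.repr.symm.injective.comp (Function.Injective.comp ?_ B.repr.injective)
  have : ⇑(Finsupp.lmapDomain F F (⇑g)) = Finsupp.mapDomain (⇑g) := rfl
  rw [this]
  exact Finsupp.mapDomain_injective g.injective

end VectorSpace

section Hull

variable (B : Type u) [AddCommGroup B]

private noncomputable def thePi : (B →₀ ℤ) →+ B :=
  Finsupp.liftAddHom (fun b => zmultiplesHom B b)

@[simp] private lemma thePi_single (b : B) : thePi B (Finsupp.single b 1) = b := by
  simp [thePi]

private noncomputable def theJ : (B →₀ ℤ) →+ (B →₀ ℚ) :=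
  Finsupp.mapRange.addMonoidHom (Int.castAddHom ℚ)

private lemma theJ_injective : Function.Injective (theJ B) :=
  Finsupp.mapRange_injective _ (map_zero _) (fun a b h => by
    have : ((a : ℚ)) = (b : ℚ) := h
    exact_mod_cast this)

private noncomputable def theK : AddSubgroup (B →₀ ℚ) :=
  (AddMonoidHom.ker (thePi B)).map (theJ B)

private noncomputable abbrev theD := (B →₀ ℚ) ⧸ (theK B)

private noncomputable def theMk : (B →₀ ℚ) →+ theD B := QuotientAddGroup.mk' (theK B)

private lemma theMk_surjective : Function.Surjective (theMk B) :=
  QuotientAddGroup.mk'_surjective _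

private lemma mem_theK_iff {x : B →₀ ℤ} : theJ B x ∈ theK B ↔ thePi B x = 0 := by
  constructor
  · rintro ⟨y, hy, hxy⟩
    have : y = x := theJ_injective B hxy
    subst this
    exact hy
  · intro h
    exact ⟨x, h, rfl⟩

private noncomputable def theIota : B →+ theD B :=
  AddMonoidHom.mk' (fun b => theMk B (theJ B (Finsupp.single b 1))) (by
    intro a b
    show (QuotientAddGroup.mk (theJ B (Finsupp.single (a+b) 1)) : theD B)
      = QuotientAddGroup.mk (theJ B (Finsupp.single a 1) + theJ B (Finsupp.single b 1))
    rw [show (theJ B fun₀ | a => (1:ℤ)) + (theJ B fun₀ | b => (1:ℤ))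
        = theJ B ((fun₀ | a => (1:ℤ)) + fun₀ | b => (1:ℤ)) from (map_add _ _ _).symm]
    rw [QuotientAddGroup.eq_iff_sub_mem, ← map_sub, mem_theK_iff]
    simp)

private lemma theIota_injective : Function.Injective (theIota B) := by
  rw [injective_iff_map_eq_zero]
  intro a ha
  have : theJ B (Finsupp.single a 1) ∈ theK B := by
    rwa [theIota, AddMonoidHom.mk'_apply, theMk, QuotientAddGroup.mk'_apply,
      QuotientAddGroup.eq_zero_iff] at ha
  rw [mem_theK_iff] at this
  simpa using this

private lemma card_Fq (hB : #B ≤ Cardinal.continuum.{u}) :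
    #(B →₀ ℚ) ≤ Cardinal.continuum.{u} := by
  rcases finite_or_infinite B with h | h
  · have : Countable (B →₀ ℚ) := by
      haveI : Finite B := h
      infer_instance
    exact le_trans Cardinal.mk_le_aleph0 Cardinal.aleph0_le_continuum
  · rw [Cardinal.mk_finsupp_lift_of_infinite]
    refine max_le ?_ ?_
    · simpa using hB
    · refine le_trans ?_ Cardinal.aleph0_le_continuum
      simpa using (Cardinal.mk_le_aleph0 (α := ℚ))

private lemma card_theD (hB : #B ≤ Cardinal.continuum.{u}) :
    #(theD B) ≤ Cardinal.continuum.{u} :=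
  le_trans (Cardinal.mk_le_of_surjective (theMk_surjective B)) (card_Fq B hB)

private noncomputable instance : DivisibleBy (B →₀ ℚ) ℤ where
  div x n := ((n : ℚ)⁻¹) • x
  div_zero x := by simp
  div_cancel {n} x hn := by
    have : (n : ℚ) ≠ 0 := Int.cast_ne_zero.mpr hn
    rw [← Int.cast_smul_eq_zsmul ℚ, smul_smul, mul_inv_cancel₀ this, one_smul]

private noncomputable instance : DivisibleBy (theD B) ℤ :=
  Function.Surjective.divisibleBy (theMk B) (theMk_surjective B)
    (fun a n => map_zsmul _ n a)

end Hull

section TorsionFree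

private lemma span_rat_torsion {M : Type u} [AddCommGroup M] [Module ℚ M] (K : AddSubgroup M)
    {x : M} (hx : x ∈ Submodule.span ℚ (K : Set M)) :
    ∃ n : ℤ, n ≠ 0 ∧ n • x ∈ K := by
  induction hx using Submodule.span_induction with
  | mem y hy => exact ⟨1, one_ne_zero, by simpa⟩
  | zero => exact ⟨1, one_ne_zero, by simp [K.zero_mem]⟩
  | add y z _ _ hy hz =>
    obtain ⟨m, hm, hmy⟩ := hy
    obtain ⟨n, hn, hnz⟩ := hz
    refine ⟨m * n, mul_ne_zero hm hn, ?_⟩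
    rw [smul_add]
    refine K.add_mem ?_ ?_
    · rw [mul_comm, mul_smul]
      exact K.zsmul_mem hmy n
    · rw [mul_smul]
      exact K.zsmul_mem hnz m
  | smul q y _ hy =>
    obtain ⟨n, hn, hny⟩ := hy
    refine ⟨(q.den : ℤ) * n, mul_ne_zero (by exact_mod_cast q.den_nz) hn, ?_⟩
    have h1 : ((q.den : ℤ) * n) • (q • y) = (q.den : ℤ) • (q • (n • y)) := by
      rw [mul_smul]
      congr 1
      rw [smul_comm]
    rw [h1, ← Int.cast_smul_eq_zsmul ℚ (q.den : ℤ), smul_smul]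
    have h2 : ((q.den : ℤ) : ℚ) * q = (q.num : ℚ) := by
      push_cast
      rw [mul_comm]
      exact_mod_cast Rat.mul_den_eq_num q
    rw [h2, Int.cast_smul_eq_zsmul]
    exact K.zsmul_mem hny q.num

end TorsionFree

section Socle

notation "ℚC" => AddCircle (1 : ℚ)

private noncomputable def zmodToC (p : ℕ) [NeZero p] : ZMod p →+ ℚC :=
  ZMod.lift p ⟨zmultiplesHom ℚC (((p : ℚ)⁻¹ : ℚ) : ℚC), by
    simp only [zmultiplesHom_apply]
    rw [← QuotientAddGroup.mk_zsmul]
    have : ((p : ℤ) • ((p : ℚ)⁻¹) : ℚ) = 1 := by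
      have hp : (p : ℚ) ≠ 0 := Nat.cast_ne_zero.mpr (NeZero.ne p)
      rw [zsmul_eq_mul]
      push_cast
      field_simp
    rw [this]
    exact (AddCircle.coe_period 1)⟩

private lemma zmodToC_injective (p : ℕ) [NeZero p] : Function.Injective (zmodToC p) := by
  rw [injective_iff_map_eq_zero]
  intro x hx
  have hval : x = ((x.val : ℤ) : ZMod p) := by simp [ZMod.natCast_val, ZMod.intCast_cast]
  rw [hval, zmodToC, ZMod.lift_coe] at hx
  simp only [zmultiplesHom_apply] at hx
  rw [← QuotientAddGroup.mk_zsmul, AddCircle.coe_eq_zero_iff] at hx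
  obtain ⟨n, hn⟩ := hx
  have hp : (p : ℚ) ≠ 0 := Nat.cast_ne_zero.mpr (NeZero.ne p)
  have : (x.val : ℚ) = (n : ℚ) * p := by
    have := hn.symm
    rw [zsmul_eq_mul, zsmul_eq_mul] at this
    field_simp at this ⊢
    push_cast at this ⊢
    linarith [this]
  have hdvd : (p : ℤ) ∣ (x.val : ℤ) := ⟨n, by rw [mul_comm] at this; exact_mod_cast this⟩
  have hlt : x.val < p := ZMod.val_lt x
  have hdvd' : p ∣ x.val := Int.ofNat_dvd.mp (by exact_mod_cast hdvd)
  have : x.val = 0 := Nat.eq_zero_of_dvd_of_lt hdvd' hlt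
  rw [hval, this]
  simp

private lemma socle_embed (D : Type u) [AddCommGroup D] (p : ℕ) [NeZero p]
    (Dp : AddSubgroup D) (hDp : ∀ x : Dp, p • x = (0 : Dp)) [Fact p.Prime]
    (hcard : #Dp ≤ Cardinal.continuum.{u}) :
    ∃ s : (Dp : AddSubgroup D) →+ (ℕ → ℚC), Function.Injective s := by
  haveI : Module (ZMod p) Dp := AddCommGroup.zmodModule hDp
  obtain ⟨uu, huu⟩ := exists_linear_inj (ZMod p) Dp hcard
  refine ⟨{ toFun := fun v n => zmodToC p (uu v n)
            map_zero' := by funext n; simp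
            map_add' := by intro a b; funext n; simp }, ?_⟩
  rw [injective_iff_map_eq_zero]
  intro v hv
  have huv : uu v = 0 := by
    funext n
    have := congrFun hv n
    exact (injective_iff_map_eq_zero _).mp (zmodToC_injective p) _ this
  exact huu (by rw [huv, map_zero])

private lemma prime_part (D : Type u) [AddCommGroup D] [DivisibleBy D ℤ]
    (hD : #D ≤ Cardinal.continuum.{u}) (p : ℕ) (hp : p.Prime) :
    ∃ f : D →+ (ℕ → ℚC), ∀ y : D, p • y = 0 → f y = 0 → y = 0 := by
  classical
  haveI : Fact p.Prime := ⟨hp⟩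
  haveI : NeZero p := ⟨hp.ne_zero⟩
  set h : D →+ D := AddMonoidHom.mk' (fun x => p • x) (fun a b => smul_add p a b) with hh
  set Dp := h.ker
  have hmod : ∀ x : (Dp : AddSubgroup D), p • x = (0 : Dp) := by
    rintro ⟨x, hx⟩
    ext
    rw [AddMonoidHom.mem_ker] at hx
    simpa [hh] using hx
  have hcard : #Dp ≤ Cardinal.continuum.{u} :=
    le_trans (Cardinal.mk_le_of_injective Subtype.val_injective) hD
  obtain ⟨sp, hspinj⟩ := socle_embed D p Dp hmod hcard
  have baer : Module.Baer ℤ (ℕ → ℚC) := Module.Baer.of_divisible _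
  obtain ⟨f, hf⟩ := baer.extension_property_addMonoidHom Dp.subtype Subtype.val_injective sp
  refine ⟨f, fun y hy hfy => ?_⟩
  have hmem : y ∈ Dp := by
    rw [AddMonoidHom.mem_ker]
    simpa [hh] using hy
  have heq : f (Dp.subtype ⟨y, hmem⟩) = sp ⟨y, hmem⟩ := by
    rw [← AddMonoidHom.comp_apply, hf]
  have h0 : sp ⟨y, hmem⟩ = 0 := by
    rw [← heq]
    simpa using hfy
  have := (injective_iff_map_eq_zero _).mp hspinj _ h0
  exact congrArg Subtype.val this

end Socle

section Main

private lemma main_additive (B : Type u) [AddCommGroup B]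
    (hB : #B ≤ Cardinal.continuum.{u}) :
    ∃ Φ : B →+ ((ℕ → ℚ) × (Nat.Primes → ℕ → ℚC)), Function.Injective Φ := by
  classical
  have hD : #(theD B) ≤ Cardinal.continuum.{u} := card_theD B hB
  -- the prime (socle) components
  have hpp : ∀ p : Nat.Primes, ∃ f : theD B →+ (ℕ → ℚC),
      ∀ y : theD B, (p : ℕ) • y = 0 → f y = 0 → y = 0 :=
    fun p => prime_part (theD B) hD p.1 p.2
  choose f hfp using hpp
  -- the torsion-free component
  set Kq : Submodule ℚ (B →₀ ℚ) := Submodule.span ℚ ((theK B : Set (B →₀ ℚ)))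
  set V := (B →₀ ℚ) ⧸ Kq with hV_def
  have hcardV : #V ≤ Cardinal.continuum.{u} :=
    le_trans (Cardinal.mk_le_of_surjective (Submodule.mkQ_surjective Kq)) (card_Fq B hB)
  obtain ⟨uq, huq⟩ := exists_linear_inj ℚ V hcardV
  have hg0aux : ∀ x ∈ theK B, Kq.mkQ.toAddMonoidHom x = 0 := by
    intro x hx
    simp only [LinearMap.toAddMonoidHom_coe, Submodule.mkQ_apply]
    rw [Submodule.Quotient.mk_eq_zero]
    exact Submodule.subset_span hx
  set g0 : theD B →+ V := QuotientAddGroup.lift (theK B) Kq.mkQ.toAddMonoidHom hg0aux with hg0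
  have hg0t : ∀ d : theD B, g0 d = 0 → ∃ n : ℤ, n ≠ 0 ∧ n • d = 0 := by
    intro d hd
    induction d using QuotientAddGroup.induction_on with
    | H x =>
      have hx : x ∈ Kq := by
        rw [hg0] at hd
        have : Kq.mkQ.toAddMonoidHom x = 0 := hd
        simpa only [LinearMap.toAddMonoidHom_coe, Submodule.mkQ_apply,
          Submodule.Quotient.mk_eq_zero] using this
      obtain ⟨n, hn, hnx⟩ := span_rat_torsion (theK B) hx
      refine ⟨n, hn, ?_⟩
      rw [← QuotientAddGroup.mk_zsmul, QuotientAddGroup.eq_zero_iff]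
      exact hnx
  -- assemble
  set Φ0 : theD B →+ ((ℕ → ℚ) × (Nat.Primes → ℕ → ℚC)) :=
    AddMonoidHom.mk' (fun d => (uq (g0 d), fun p => f p d)) (by
      intro a b
      refine Prod.ext ?_ ?_
      · simp [map_add]
      · funext p
        simp [map_add]) with hΦ0
  have hΦ0inj : Function.Injective Φ0 := by
    rw [injective_iff_map_eq_zero]
    intro d hd
    by_contra hd0
    rw [hΦ0, AddMonoidHom.mk'_apply, Prod.mk_eq_zero] at hd
    obtain ⟨hd1, hd2⟩ := hd
    have hg0d : g0 d = 0 := huq (by rw [hd1, map_zero])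
    obtain ⟨n, hn, hnd⟩ := hg0t d hg0d
    -- d is torsion
    have hk : (n.natAbs) • d = 0 := by
      have : ((n.natAbs : ℤ)) • d = 0 := by
        rcases Int.natAbs_eq n with h | h
        · rw [← h]; exact hnd
        · rw [← neg_neg ((n.natAbs : ℤ))]
          rw [← h]
          rw [neg_zsmul]
          rw [hnd, neg_zero]
      rwa [natCast_zsmul] at this
    have hfin : IsOfFinAddOrder d :=
      isOfFinAddOrder_iff_nsmul_eq_zero.mpr
        ⟨n.natAbs, Nat.pos_of_ne_zero (Int.natAbs_ne_zero.mpr hn), hk⟩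
    set m := addOrderOf d with hm_def
    have hm : 0 < m := hfin.addOrderOf_pos
    have hm1 : m ≠ 1 := by
      intro h
      exact hd0 (AddMonoid.addOrderOf_eq_one_iff.mp h)
    set p := m.minFac with hp_def
    have hp : p.Prime := Nat.minFac_prime hm1
    set y : theD B := (m / p) • d with hy_def
    have hpy : p • y = 0 := by
      rw [hy_def, smul_smul, Nat.mul_div_cancel' (Nat.minFac_dvd m)]
      exact addOrderOf_nsmul_eq_zero d
    have hy0 : y ≠ 0 := by
      intro h
      have hdvd : m ∣ m / p := addOrderOf_dvd_of_nsmul_eq_zero h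
      have hlt : m / p < m := Nat.div_lt_self hm hp.one_lt
      have hpos : 0 < m / p := Nat.div_pos (Nat.minFac_le hm) hp.pos
      exact absurd (Nat.le_of_dvd hpos hdvd) (not_le.2 hlt)
    have hfy : f ⟨p, hp⟩ y = 0 := by
      have : f ⟨p, hp⟩ d = 0 := congrFun hd2 ⟨p, hp⟩
      rw [hy_def, map_nsmul, this, smul_zero]
    exact hy0 (hfp ⟨p, hp⟩ y hpy hfy)
  exact ⟨Φ0.comp (theIota B), hΦ0inj.comp (theIota_injective B)⟩

end Main

/-- Every abelian group of cardinality at most `2 ^ ℵ₀` admits a faithful action on a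
countable set. -/
theorem abelian_countably_representable (A : Type*) [CommGroup A]
    (hA : Cardinal.mk A ≤ Cardinal.continuum) :
    ∃ (X : Type) (_ : Countable X) (φ : A →* Equiv.Perm X), Function.Injective φ := by
  classical
  have hA' : #(Additive A) ≤ Cardinal.continuum := hA
  obtain ⟨Φ, hΦ⟩ := main_additive (Additive A) hA'
  haveI hCC : Countable ℚC := by
    have : Function.Surjective (QuotientAddGroup.mk (s := AddSubgroup.zmultiples (1:ℚ))) :=
      QuotientAddGroup.mk_surjective
    exact this.countable
  set X : Type := (ℕ × ℚ) ⊕ ((Nat.Primes × ℕ) × ℚC) with hX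
  haveI : Countable X := by infer_instance
  set φ : A →* Equiv.Perm X :=
    { toFun := fun a => Equiv.sumCongr
        (Equiv.prodShear (Equiv.refl ℕ) (fun n => Equiv.addLeft ((Φ (Additive.ofMul a)).1 n)))
        (Equiv.prodShear (Equiv.refl (Nat.Primes × ℕ))
          (fun q => Equiv.addLeft ((Φ (Additive.ofMul a)).2 q.1 q.2)))
      map_one' := by
        ext x
        rcases x with ⟨n, r⟩ | ⟨q, c⟩ <;>
          simp [Equiv.prodShear]
      map_mul' := by
        intro a b
        ext x
        have hmap : Φ (Additive.ofMul (a * b))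
            = Φ (Additive.ofMul a) + Φ (Additive.ofMul b) := by
          rw [show Additive.ofMul (a * b) = Additive.ofMul a + Additive.ofMul b from rfl,
            map_add]
        rcases x with ⟨n, r⟩ | ⟨q, c⟩ <;>
          simp [Equiv.prodShear, Equiv.sumCongr, Sum.map, Equiv.Perm.mul_apply,
            Equiv.coe_fn_mk, hmap, add_assoc] } with hφ
  refine ⟨X, inferInstance, φ, ?_⟩
  have := injective_iff_map_eq_one φ
  rw [this]
  intro a ha
  have h1 : (Φ (Additive.ofMul a)).1 = 0 := by
    funext n
    have := Equiv.ext_iff.mp ha (Sum.inl (n, 0))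
    simp [hφ, Equiv.prodShear, Equiv.sumCongr, Sum.map, Equiv.coe_fn_mk] at this
    exact congrArg Prod.snd (Sum.inl.inj this)
  have h2 : (Φ (Additive.ofMul a)).2 = 0 := by
    funext p
    funext n
    have := Equiv.ext_iff.mp ha (Sum.inr ((p, n), 0))
    simp [hφ, Equiv.prodShear, Equiv.sumCongr, Sum.map, Equiv.coe_fn_mk] at this
    exact congrArg Prod.snd (Sum.inr.inj this)
  have h0 : Φ (Additive.ofMul a) = 0 := Prod.ext h1 (by simpa using h2)
  have : Additive.ofMul a = 0 := hΦ (by rw [h0, map_zero])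
  exact this
end

section
/- A direct sum of at most 2^ℵ₀ copies of the Prüfer group ℤ(p^∞) embeds into the countable direct power ℤ(p^∞)^ℕ; consequently it admits a faithful action on a countable set. -/
/-- Initial segment of length `n` of a binary sequence, as a list. -/
private def pruefer_seg (s : ℕ → Bool) (n : ℕ) : List Bool := List.ofFn fun k : Fin n => s k

private lemma pruefer_seg_length (s : ℕ → Bool) (n : ℕ) : (pruefer_seg s n).length = n := by
  simp [pruefer_seg]

/-- The additive hom `G →+ (List Bool → G)` supported on initial segments of `s`. -/
private def pruefer_branchHom {G : Type} [AddCommMonoid G] (s : ℕ → Bool) :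
    G →+ (List Bool → G) where
  toFun x l := if pruefer_seg s l.length = l then x else 0
  map_zero' := by funext l; simp
  map_add' x y := by
    funext l; by_cases h : pruefer_seg s l.length = l <;> simp [h]

/-- A direct sum of at most continuum many copies of any abelian group `G` embeds
into the countable direct power `G ^ ℕ`. -/
private lemma pruefer_embed_exists (G : Type) [AddCommGroup G] (ι : Type)
    (hι : Cardinal.mk ι ≤ Cardinal.continuum) :
    ∃ φ : (ι →₀ G) →+ (ℕ → G), Function.Injective φ := by
  have hcont : Cardinal.mk (ℕ → Bool) = Cardinal.continuum := by
    rw [Cardinal.mk_arrow]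
    simp [Cardinal.mk_bool, Cardinal.two_power_aleph0]
  obtain ⟨f⟩ : Nonempty (ι ↪ (ℕ → Bool)) := by
    rw [← Cardinal.le_def, hcont]; exact hι
  set φ₀ : (ι →₀ G) →+ (List Bool → G) :=
    Finsupp.liftAddHom (fun i => pruefer_branchHom (f i)) with hφ₀
  have hinj : Function.Injective φ₀ := by
    classical
    rw [injective_iff_map_eq_zero]
    intro v hv
    ext i
    simp only [Finsupp.coe_zero, Pi.zero_apply]
    by_contra h
    have hi : i ∈ v.support := Finsupp.mem_support_iff.mpr h
    set N : ℕ :=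
      (v.support.sup fun j => if hj : ∃ k, f j k ≠ f i k then Nat.find hj else 0) + 1 with hN
    have key : ∀ j ∈ v.support, j ≠ i → pruefer_seg (f j) N ≠ pruefer_seg (f i) N := by
      intro j hj hji
      have hne : f j ≠ f i := fun he => hji (f.injective he)
      have hk : ∃ k, f j k ≠ f i k := Function.ne_iff.mp hne
      have hlt : Nat.find hk < N := by
        have hle := Finset.le_sup
          (f := fun j => if hj : ∃ k, f j k ≠ f i k then Nat.find hj else 0) hj
        simp only [dif_pos hk] at hle
        omega
      intro he
      simp only [pruefer_seg] at he
      exact (Nat.find_spec hk) (congrFun (List.ofFn_inj.mp he) ⟨Nat.find hk, hlt⟩)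
    have hval := congrFun hv (pruefer_seg (f i) N)
    rw [hφ₀] at hval
    simp only [Finsupp.liftAddHom_apply, Finsupp.sum, Finset.sum_apply, Pi.zero_apply] at hval
    rw [Finset.sum_eq_single_of_mem i hi] at hval
    · simp only [pruefer_branchHom, AddMonoidHom.coe_mk, ZeroHom.coe_mk,
        pruefer_seg_length, if_pos rfl] at hval
      exact h hval
    · intro j hj hji
      simp only [pruefer_branchHom, AddMonoidHom.coe_mk, ZeroHom.coe_mk, pruefer_seg_length]
      rw [if_neg (key j hj hji)]
  haveI : Denumerable (List Bool) := Denumerable.ofEncodableOfInfinite _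
  let E : (List Bool → G) ≃+ (ℕ → G) :=
    AddEquiv.arrowCongr (Denumerable.eqv (List Bool)) (AddEquiv.refl G)
  exact ⟨E.toAddMonoidHom.comp φ₀, E.injective.comp hinj⟩

/-- The translation action of a group embedded in `ℕ → G` on `ℕ × G`. -/
private noncomputable def prueferPerm {G ι : Type} [AddCommGroup G] (φ : (ι →₀ G) →+ (ℕ → G)) :
    Multiplicative (ι →₀ G) →* Equiv.Perm (ℕ × G) where
  toFun g :=
    { toFun := fun q => (q.1, φ (Multiplicative.toAdd g) q.1 + q.2)
      invFun := fun q => (q.1, -(φ (Multiplicative.toAdd g) q.1) + q.2)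
      left_inv := fun q => by simp
      right_inv := fun q => by simp }
  map_one' := by ext q <;> simp
  map_mul' a b := by ext q <;> simp [add_assoc]

private lemma prueferPerm_apply {G ι : Type} [AddCommGroup G] (φ : (ι →₀ G) →+ (ℕ → G))
    (g : Multiplicative (ι →₀ G)) (q : ℕ × G) :
    prueferPerm φ g q = (q.1, φ (Multiplicative.toAdd g) q.1 + q.2) := rfl

/-- A direct sum of at most `2 ^ ℵ₀` copies of the Prüfer group `ℤ(p^∞)` (realised as the
`p`-primary component of `ℚ/ℤ`) embeds into the countable direct power `ℤ(p^∞)^ℕ`;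
consequently it admits a faithful action on a countable set. -/
theorem pruefer_direct_sum_embeds_and_representable (p : ℕ) [Fact p.Prime]
    (ι : Type) (hι : Cardinal.mk ι ≤ Cardinal.continuum) :
    (∃ φ : (ι →₀ AddCommGroup.primaryComponent (ℚ ⧸ AddSubgroup.zmultiples (1 : ℚ)) p) →+
        (ℕ → AddCommGroup.primaryComponent (ℚ ⧸ AddSubgroup.zmultiples (1 : ℚ)) p),
      Function.Injective φ) ∧
    ∃ (X : Type) (_ : Countable X)
      (ψ : Multiplicative
          (ι →₀ AddCommGroup.primaryComponent (ℚ ⧸ AddSubgroup.zmultiples (1 : ℚ)) p) →*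
        Equiv.Perm X),
      Function.Injective ψ := by
  set G := ↥(AddCommGroup.primaryComponent (ℚ ⧸ AddSubgroup.zmultiples (1 : ℚ)) p) with hG
  obtain ⟨φ, hφ⟩ := pruefer_embed_exists G ι hι
  refine ⟨⟨φ, hφ⟩, ℕ × G, ?_, ?_⟩
  · haveI : Countable (ℚ ⧸ AddSubgroup.zmultiples (1 : ℚ)) := Quotient.countable
    haveI : Countable G := Subtype.countable
    infer_instance
  · refine ⟨prueferPerm φ, ?_⟩
    intro a b hab
    have hq : ∀ n : ℕ, φ (Multiplicative.toAdd a) n = φ (Multiplicative.toAdd b) n := by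
      intro n
      have h2 := congrArg (fun (e : Equiv.Perm (ℕ × G)) => (e (n, 0)).2) hab
      simpa only [prueferPerm_apply, add_zero] using h2
    have : Multiplicative.toAdd a = Multiplicative.toAdd b := hφ (funext hq)
    exact Multiplicative.toAdd.injective this
end
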